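/- The unit of the existential completion is a morphism of primary doctrines: for every object A, the map ι_A : P(A) → P^∃(A) sending α to (id_A, α) preserves finite meets (top and binary infima), and ι is natural: for every f : A → B, ι_A ∘ P_f = P^∃_f ∘ ι_B. -/

import Mathlib

open CategoryTheory Limits

universe w v u

/-- A primary doctrine: a contravariant assignment of inf-semilattices with top
to objects of `C`, functorial and meet/top-preserving on morphisms. -/
structure PrimaryDoctrine (C : Type u) [Category.{v} C] where
  P : C → Type w
  [instInf : ∀ A, SemilatticeInf (P A)]
  [instTop : ∀ A, OrderTop (P A)]
  map : ∀ {A B : C}, (A ⟶ B) → P B → P A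
  map_id : ∀ (A : C) (α : P A), map (𝟙 A) α = α
  map_comp : ∀ {A B D : C} (f : A ⟶ B) (g : B ⟶ D) (α : P D),
    map (f ≫ g) α = map f (map g α)
  map_mono : ∀ {A B : C} (f : A ⟶ B), Monotone (map f)
  map_top : ∀ {A B : C} (f : A ⟶ B), map f ⊤ = ⊤
  map_inf : ∀ {A B : C} (f : A ⟶ B) (α β : P B), map f (α ⊓ β) = map f α ⊓ map f β

attribute [instance] PrimaryDoctrine.instInf PrimaryDoctrine.instTop

/-- A class `Λ` of morphisms containing identities, closed under composition,
and closed under (chosen) pullbacks along arbitrary morphisms. -/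
structure LambdaClass (C : Type u) [Category.{v} C] where
  mem : ∀ {X Y : C}, (X ⟶ Y) → Prop
  id_mem : ∀ X : C, mem (𝟙 X)
  comp_mem : ∀ {X Y Z : C} {f : X ⟶ Y} {g : Y ⟶ Z}, mem f → mem g → mem (f ≫ g)
  pbObj : ∀ {X Y Z : C} (g : X ⟶ Z), mem g → ∀ _f : Y ⟶ Z, C
  pbFst : ∀ {X Y Z : C} (g : X ⟶ Z) (hg : mem g) (f : Y ⟶ Z), pbObj g hg f ⟶ X
  pbSnd : ∀ {X Y Z : C} (g : X ⟶ Z) (hg : mem g) (f : Y ⟶ Z), pbObj g hg f ⟶ Y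
  isPB : ∀ {X Y Z : C} (g : X ⟶ Z) (hg : mem g) (f : Y ⟶ Z),
    IsPullback (pbFst g hg f) (pbSnd g hg f) g f
  pbSnd_mem : ∀ {X Y Z : C} (g : X ⟶ Z) (hg : mem g) (f : Y ⟶ Z), mem (pbSnd g hg f)

variable {C : Type u} [Category.{v} C]

/-- An element of the fibre `P^∃(A)` of the existential completion:
a pair of a morphism `g : B ⟶ A` in `Λ` and `α ∈ P(B)`. -/
structure ExEl (P : PrimaryDoctrine C) (L : LambdaClass C) (A : C) where
  B : C
  g : B ⟶ A
  hg : L.mem g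
  α : P.P B

variable {P : PrimaryDoctrine C} {L : LambdaClass C}

/-- The preorder on `P^∃(A)`. -/
def ExLe {A : C} (x y : ExEl P L A) : Prop :=
  ∃ w : x.B ⟶ y.B, w ≫ y.g = x.g ∧ x.α ≤ P.map w y.α

/-- Equivalence in the preorder `P^∃(A)`. -/
def ExEquiv {A : C} (x y : ExEl P L A) : Prop := ExLe x y ∧ ExLe y x

/-- The top element `(id_A, ⊤_A)` of `P^∃(A)`. -/
def topE (P : PrimaryDoctrine C) (L : LambdaClass C) (A : C) : ExEl P L A :=
  ⟨A, 𝟙 A, L.id_mem A, ⊤⟩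

/-- Reindexing `P^∃_f` along `f : A ⟶ B`, via the chosen pullback. -/
def reindex {A B : C} (f : A ⟶ B) (y : ExEl P L B) : ExEl P L A :=
  ⟨L.pbObj y.g y.hg f, L.pbSnd y.g y.hg f, L.pbSnd_mem y.g y.hg f,
   P.map (L.pbFst y.g y.hg f) y.α⟩

/-- Binary infimum in `P^∃(A)`, constructed via the chosen pullback. -/
def infE {A : C} (x y : ExEl P L A) : ExEl P L A :=
  ⟨L.pbObj x.g x.hg y.g, L.pbFst x.g x.hg y.g ≫ x.g,
   (by rw [(L.isPB x.g x.hg y.g).w]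
       exact L.comp_mem (L.pbSnd_mem x.g x.hg y.g) y.hg),
   P.map (L.pbFst x.g x.hg y.g) x.α ⊓ P.map (L.pbSnd x.g x.hg y.g) y.α⟩

/-- The left adjoint `∃^e_f` along `f ∈ Λ`, given by post-composition. -/
def existE {A B : C} (f : A ⟶ B) (hf : L.mem f) (x : ExEl P L A) : ExEl P L B :=
  ⟨x.B, x.g ≫ f, L.comp_mem x.hg hf, x.α⟩

/-- The unit `ι_A : P(A) → P^∃(A)`, `α ↦ (id_A, α)`. -/
def iota (P : PrimaryDoctrine C) (L : LambdaClass C) (A : C) (α : P.P A) : ExEl P L A :=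
  ⟨A, 𝟙 A, L.id_mem A, α⟩

/-- The unit `ι` of the existential completion is a morphism of primary doctrines:
each `ι_A` preserves the top element and binary infima, and `ι` is natural. -/
theorem iota_morphism_of_primary_doctrines [HasFiniteProducts C]
    (hproj : ∀ A B : C, L.mem (prod.fst : A ⨯ B ⟶ A)) :
    (∀ A : C, ExEquiv (iota P L A ⊤) (topE P L A)) ∧
    (∀ (A : C) (α β : P.P A),
      ExEquiv (iota P L A (α ⊓ β)) (infE (iota P L A α) (iota P L A β))) ∧
    (∀ {A B : C} (f : A ⟶ B) (α : P.P B),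
      ExEquiv (iota P L A (P.map f α)) (reindex f (iota P L B α))) := by
  refine ⟨?_, ?_, ?_⟩
  · intro A
    exact ⟨⟨𝟙 A, by simp [iota, topE], by simp only [iota, topE]; rw [P.map_id]; exact le_rfl⟩,
           ⟨𝟙 A, by simp [iota, topE], by simp only [iota, topE]; rw [P.map_id]; exact le_rfl⟩⟩
  · intro A α β
    set pb := L.isPB (𝟙 A) (L.id_mem A) (𝟙 A)
    have hfs : L.pbFst (𝟙 A) (L.id_mem A) (𝟙 A) = L.pbSnd (𝟙 A) (L.id_mem A) (𝟙 A) := by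
      have := pb.w; simpa using this
    constructor
    · refine ⟨pb.lift (𝟙 A) (𝟙 A) (by simp), ?_, ?_⟩
      · show pb.lift (𝟙 A) (𝟙 A) (by simp) ≫ L.pbFst (𝟙 A) (L.id_mem A) (𝟙 A) ≫ 𝟙 A = 𝟙 A
        simp [pb.lift_fst]
      · simp only [iota, infE]
        show α ⊓ β ≤ P.map (pb.lift (𝟙 A) (𝟙 A) (by simp)) (P.map (L.pbFst (𝟙 A) (L.id_mem A) (𝟙 A)) α ⊓ P.map (L.pbSnd (𝟙 A) (L.id_mem A) (𝟙 A)) β)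
        rw [P.map_inf, ← P.map_comp, ← P.map_comp, pb.lift_fst, pb.lift_snd, P.map_id, P.map_id]
    · refine ⟨L.pbFst (𝟙 A) (L.id_mem A) (𝟙 A), rfl, ?_⟩
      simp only [iota, infE]
      rw [P.map_inf, hfs]
      exact le_rfl
  · intro A B f α
    set pb := L.isPB (𝟙 B) (L.id_mem B) f
    have hfs : L.pbFst (𝟙 B) (L.id_mem B) f = L.pbSnd (𝟙 B) (L.id_mem B) f ≫ f := by
      have := pb.w; simpa using this
    constructor
    · refine ⟨pb.lift f (𝟙 A) ((Category.comp_id f).trans (Category.id_comp f).symm), pb.lift_snd _ _ _, ?_⟩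
      simp only [iota, reindex]
      show P.map f α ≤ P.map (pb.lift f (𝟙 A) ((Category.comp_id f).trans (Category.id_comp f).symm)) (P.map (L.pbFst (𝟙 B) (L.id_mem B) f) α)
      rw [← P.map_comp, pb.lift_fst]
    · refine ⟨L.pbSnd (𝟙 B) (L.id_mem B) f, by simp [iota, reindex], ?_⟩
      simp only [iota, reindex]
      rw [← P.map_comp, ← hfs]
      exact le_rfl
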